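/- Let ρ₁, ρ₂ > 0, let ν₁, ν₂ be Borel probability measures on (0,∞), and set Φ₁ = Φ_{ρ₁,ν₁}, Φ₂ = Φ_{ρ₂,ν₂}. Suppose μ₃ is a probability measure on (0,∞) whose Laplace transform equals Φ₃(s) := Φ₂(−log Φ₁(s)) for all s ≥ 0 (the law at time 1 of the Lévy subordinator with one-dimensional law Φ₁ subordinated by the one with law Φ₂). Then Φ₃ is slowly varying at infinity, and consequently μ₃ is not selfdecomposable. (Proposition 3.1.) -/

import Mathlib

open MeasureTheory Filter Set

/-- Laplace transform of a (probability) measure on `ℝ`. -/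
noncomputable def laplaceTransform (μ : Measure ℝ) (s : ℝ) : ℝ :=
  ∫ x, Real.exp (-s * x) ∂μ

/-- The Laplace transform `Φ_{ρ,ν}` of the shot noise distribution with exponent `ρ`
and jump law `ν`:  `Φ_{ρ,ν}(s) = exp(−ρ ∫₀^s (1 − ψ_ν(u)) u⁻¹ du)`. -/
noncomputable def snLT (ρ : ℝ) (ν : Measure ℝ) (s : ℝ) : ℝ :=
  Real.exp (-ρ * ∫ u in Set.Ioc (0:ℝ) s, (1 - laplaceTransform ν u) / u)

/-- integrand of snLT -/
noncomputable def snG (ν : Measure ℝ) (u : ℝ) : ℝ := (1 - laplaceTransform ν u) / u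

noncomputable def snI (ν : Measure ℝ) (s : ℝ) : ℝ := ∫ u in Set.Ioc (0:ℝ) s, snG ν u

lemma snLT_eq (ρ : ℝ) (ν : Measure ℝ) (s : ℝ) :
    snLT ρ ν s = Real.exp (-(ρ * snI ν s)) := by
  simp [snLT, snI, snG, neg_mul]

section basic
variable {ν : Measure ℝ}

lemma sn_exp_integrable [IsFiniteMeasure ν] (hν : ∀ᵐ x ∂ν, 0 ≤ x) {u : ℝ} (hu : 0 ≤ u) :
    Integrable (fun x => Real.exp (-u*x)) ν := by
  refine Integrable.mono' (integrable_const 1) ?_ ?_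
  · exact (Real.continuous_exp.comp (continuous_const.mul continuous_id)).aestronglyMeasurable
  · filter_upwards [hν] with x hx
    rw [Real.norm_eq_abs, abs_of_pos (Real.exp_pos _), Real.exp_le_one_iff]
    nlinarith

lemma sn_LT_nonneg (u : ℝ) : 0 ≤ laplaceTransform ν u :=
  integral_nonneg fun x => (Real.exp_pos _).le

lemma sn_LT_le_one [IsProbabilityMeasure ν] (hν : ∀ᵐ x ∂ν, 0 ≤ x) {u : ℝ} (hu : 0 ≤ u) :
    laplaceTransform ν u ≤ 1 := by
  have h := integral_mono_ae (sn_exp_integrable hν hu) (integrable_const 1) ?_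
  · simpa [laplaceTransform] using h
  · filter_upwards [hν] with x hx
    rw [Real.exp_le_one_iff]; nlinarith

lemma sn_pos_ae [IsProbabilityMeasure ν] (hν : ν (Set.Iic 0) = 0) : ∀ᵐ x ∂ν, 0 < x := by
  rw [ae_iff]
  convert hν using 2
  ext x; simp [not_lt]

lemma sn_LT_lt_one [IsProbabilityMeasure ν] (hν : ∀ᵐ x ∂ν, 0 < x) {u : ℝ} (hu : 0 < u) :
    laplaceTransform ν u < 1 := by
  have hint : Integrable (fun x => Real.exp (-u*x)) ν :=
    sn_exp_integrable (hν.mono fun x hx => hx.le) hu.le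
  have hint2 : Integrable (fun x => 1 - Real.exp (-u*x)) ν := (integrable_const 1).sub hint
  have key : 0 < ∫ x, (1 - Real.exp (-u*x)) ∂ν := by
    rw [integral_pos_iff_support_of_nonneg_ae ?_ hint2]
    · have hsub : Set.Ioi (0:ℝ) ⊆ Function.support fun x => 1 - Real.exp (-u*x) := by
        intro x hx
        have : Real.exp (-u*x) < 1 := by
          rw [Real.exp_lt_one_iff]; nlinarith [mem_Ioi.mp hx]
        exact Function.mem_support.mpr (sub_ne_zero.mpr this.ne')
      refine lt_of_lt_of_le ?_ (measure_mono hsub)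
      have h1 : ν (Set.Ioi (0:ℝ))ᶜ = 0 := by
        have h := ae_iff.mp hν
        rw [Set.compl_Ioi]
        convert h using 2
        ext x
        simp [not_lt]
      by_contra h
      push_neg at h
      have h2 : ν (Set.Ioi (0:ℝ)) = 0 := le_antisymm h zero_le
      have := measure_union_le (μ := ν) (Set.Ioi (0:ℝ)) (Set.Ioi (0:ℝ))ᶜ
      rw [Set.union_compl_self, h1, h2, measure_univ] at this
      simp at this
    · filter_upwards [hν] with x hx
      have h1 : Real.exp (-u*x) ≤ 1 := by rw [Real.exp_le_one_iff]; nlinarith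
      simp only [Pi.zero_apply]
      linarith
  have hsplit : ∫ x, (1 - Real.exp (-u*x)) ∂ν = 1 - laplaceTransform ν u := by
    rw [integral_sub (integrable_const 1) hint]
    simp [laplaceTransform]
  linarith [hsplit ▸ key]

lemma sn_LT_tendsto [IsProbabilityMeasure ν] (hν : ∀ᵐ x ∂ν, 0 < x) :
    Tendsto (laplaceTransform ν) atTop (nhds 0) := by
  have h0 : (0:ℝ) = ∫ (_ : ℝ), (0:ℝ) ∂ν := by simp
  rw [h0]
  refine tendsto_integral_filter_of_dominated_convergence (fun _ => (1:ℝ)) ?_ ?_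
    (integrable_const 1) ?_
  · exact Eventually.of_forall fun u =>
      (Real.continuous_exp.comp (continuous_const.mul continuous_id)).aestronglyMeasurable
  · filter_upwards [eventually_ge_atTop (0:ℝ)] with u hu
    filter_upwards [hν] with x hx
    rw [Real.norm_eq_abs, abs_of_pos (Real.exp_pos _), Real.exp_le_one_iff]
    nlinarith
  · filter_upwards [hν] with x hx
    have h1 : Tendsto (fun u : ℝ => -u * x) atTop atBot := by
      have := Tendsto.const_mul_atTop_of_neg (neg_neg_iff_pos.mpr hx) (tendsto_id (α := ℝ))
      exact this.congr fun u => by simp [mul_comm]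
    exact Real.tendsto_exp_atBot.comp h1
end basic

section interval
variable {ν : Measure ℝ} [IsProbabilityMeasure ν]

lemma snG_nonneg (hν : ∀ᵐ x ∂ν, 0 ≤ x) {u : ℝ} (hu : 0 < u) : 0 ≤ snG ν u :=
  div_nonneg (by linarith [sn_LT_le_one hν hu.le]) hu.le

lemma snG_le_inv (hu : 0 < u) : snG ν u ≤ u⁻¹ := by
  rw [snG, div_le_iff₀ hu, inv_mul_cancel₀ hu.ne']
  linarith [sn_LT_nonneg (ν := ν) u]

lemma snG_pos (hν : ∀ᵐ x ∂ν, 0 < x) {u : ℝ} (hu : 0 < u) : 0 < snG ν u :=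
  div_pos (by linarith [sn_LT_lt_one hν hu]) hu

lemma snI_nonneg (hν : ∀ᵐ x ∂ν, 0 ≤ x) (s : ℝ) : 0 ≤ snI ν s :=
  setIntegral_nonneg measurableSet_Ioc fun u hu => snG_nonneg hν hu.1

lemma snI_split {a b : ℝ} (h0 : 0 ≤ a) (hab : a ≤ b)
    (hint : IntegrableOn (snG ν) (Set.Ioc 0 b)) :
    snI ν b = snI ν a + ∫ u in Set.Ioc a b, snG ν u := by
  rw [snI, snI, ← setIntegral_union (Set.Ioc_disjoint_Ioc_of_le le_rfl) measurableSet_Ioc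
    (hint.mono_set (Set.Ioc_subset_Ioc_right hab))
    (hint.mono_set (Set.Ioc_subset_Ioc_left h0)),
    Set.Ioc_union_Ioc_eq_Ioc h0 hab]

lemma snIncr_le (hν : ∀ᵐ x ∂ν, 0 ≤ x) {a b : ℝ} (ha : 0 < a) (hab : a ≤ b)
    (hint : IntegrableOn (snG ν) (Set.Ioc a b)) :
    ∫ u in Set.Ioc a b, snG ν u ≤ Real.log b - Real.log a := by
  have hb : 0 < b := ha.trans_le hab
  have hinv : IntegrableOn (fun u : ℝ => u⁻¹) (Set.Ioc a b) := by
    rw [← intervalIntegrable_iff_integrableOn_Ioc_of_le hab]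
    apply intervalIntegral.intervalIntegrable_inv ?_ continuousOn_id
    intro x hx
    rcases Set.mem_uIcc.mp hx with h | h
    · simp only [id]; nlinarith [h.1, h.2]
    · simp only [id]; nlinarith [h.1, h.2]
  calc ∫ u in Set.Ioc a b, snG ν u ≤ ∫ u in Set.Ioc a b, u⁻¹ := by
        exact setIntegral_mono_on hint hinv measurableSet_Ioc fun u hu => snG_le_inv (ha.trans hu.1)
      _ = Real.log b - Real.log a := by
        rw [← intervalIntegral.integral_of_le hab, integral_inv, Real.log_div hb.ne' ha.ne']
        intro h
        rcases Set.mem_uIcc.mp h with h | h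
        · nlinarith [h.1, h.2]
        · nlinarith [h.1, h.2]

lemma snIncr_pos (hν : ∀ᵐ x ∂ν, 0 < x) {a b : ℝ} (ha : 0 < a) (hab : a < b)
    (hint : IntegrableOn (snG ν) (Set.Ioc a b)) :
    0 < ∫ u in Set.Ioc a b, snG ν u := by
  rw [setIntegral_pos_iff_support_of_nonneg_ae ?_ hint]
  · have hsub : Set.Ioc a b ⊆ Function.support (snG ν) :=
      fun u hu => Function.mem_support.mpr (snG_pos hν (ha.trans hu.1)).ne'
    rw [Set.inter_eq_self_of_subset_right hsub]
    simp [Real.volume_Ioc, hab]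
  · refine (ae_restrict_iff' measurableSet_Ioc).mpr (ae_of_all _ fun u hu =>
      snG_nonneg (hν.mono fun x hx => hx.le) (ha.trans hu.1))
end interval

section conv

lemma sn_laplace_conv (μc κ : Measure ℝ) [SFinite μc] [SFinite κ] (s : ℝ) :
    laplaceTransform (Measure.conv μc κ) s = laplaceTransform μc s * laplaceTransform κ s := by
  rw [laplaceTransform, Measure.conv,
    integral_map (φ := fun p : ℝ × ℝ => p.1 + p.2) (by fun_prop)
      (f := fun x : ℝ => Real.exp (-s * x))
      ((Real.continuous_exp.comp (continuous_const.mul continuous_id')).aestronglyMeasurable)]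
  have : ∀ p : ℝ × ℝ, Real.exp (-s * (p.1 + p.2)) = Real.exp (-s * p.1) * Real.exp (-s * p.2) := by
    intro p; rw [← Real.exp_add]; ring_nf
  rw [show (fun p : ℝ × ℝ => Real.exp (-s * (p.1 + p.2)))
      = fun p : ℝ × ℝ => Real.exp (-s * p.1) * Real.exp (-s * p.2) from funext this]
  exact integral_prod_mul (fun x => Real.exp (-s * x)) (fun y => Real.exp (-s * y))

lemma sn_laplace_map (μ : Measure ℝ) (c s : ℝ) :
    laplaceTransform (Measure.map (fun x => c * x) μ) s = laplaceTransform μ (s * c) := by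
  rw [laplaceTransform, integral_map (φ := fun x : ℝ => c * x) (by fun_prop)
    (f := fun x : ℝ => Real.exp (-s * x))
    ((Real.continuous_exp.comp (continuous_const.mul continuous_id')).aestronglyMeasurable)]
  simp only [laplaceTransform]
  congr 1
  ext x
  ring_nf

lemma sn_laplace_antitone {μ : Measure ℝ} [IsProbabilityMeasure μ] (hμ : ∀ᵐ x ∂μ, 0 ≤ x)
    {s s' : ℝ} (hs : 0 ≤ s) (hss' : s ≤ s') :
    laplaceTransform μ s' ≤ laplaceTransform μ s := by
  refine integral_mono_ae (sn_exp_integrable hμ (hs.trans hss')) (sn_exp_integrable hμ hs) ?_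
  filter_upwards [hμ] with x hx
  apply Real.exp_le_exp.mpr
  nlinarith
end conv

/-- A probability measure `μ` on `[0,∞)` is selfdecomposable if for every `c ∈ (0,1)`
there is a probability measure `μ_c` on `[0,∞)` with `μ = μ_c ∗ (x ↦ c·x)_*μ`. -/
def SelfDecomposable (μ : Measure ℝ) : Prop :=
  ∀ c ∈ Set.Ioo (0:ℝ) 1, ∃ μc : Measure ℝ, IsProbabilityMeasure μc ∧ μc (Set.Iio 0) = 0 ∧
    μ = Measure.conv μc (Measure.map (fun x => c * x) μ)

/-- **Proposition 3.1.** If `Φᵢ = Φ_{ρᵢ,νᵢ}` are shot noise Laplace transforms and `μ₃`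
has Laplace transform `Φ₃(s) = Φ₂(−log Φ₁(s))` (the subordinated law), then `Φ₃` is
slowly varying at infinity and consequently `μ₃` is not selfdecomposable. -/
theorem subordinated_shot_noise_not_selfdecomposable
    (ρ₁ ρ₂ : ℝ) (hρ₁ : 0 < ρ₁) (hρ₂ : 0 < ρ₂)
    (ν₁ ν₂ : Measure ℝ) [IsProbabilityMeasure ν₁] [IsProbabilityMeasure ν₂]
    (hν₁ : ν₁ (Set.Iic 0) = 0) (hν₂ : ν₂ (Set.Iic 0) = 0)
    (μ₃ : Measure ℝ) [IsProbabilityMeasure μ₃] (hμ₃ : μ₃ (Set.Iic 0) = 0)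
    (hLT : ∀ s ≥ (0:ℝ),
      laplaceTransform μ₃ s = snLT ρ₂ ν₂ (-Real.log (snLT ρ₁ ν₁ s))) :
    (∀ t > (0:ℝ),
      Tendsto (fun s => snLT ρ₂ ν₂ (-Real.log (snLT ρ₁ ν₁ (t * s))) /
          snLT ρ₂ ν₂ (-Real.log (snLT ρ₁ ν₁ s))) atTop (nhds 1)) ∧
    ¬ SelfDecomposable μ₃ := by
  have haeν₁ : ∀ᵐ x ∂ν₁, 0 < x := sn_pos_ae hν₁
  have haeν₂ : ∀ᵐ x ∂ν₂, 0 < x := sn_pos_ae hν₂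
  have haeμ₃ : ∀ᵐ x ∂μ₃, 0 < x := sn_pos_ae hμ₃
  have haeν₁' : ∀ᵐ x ∂ν₁, 0 ≤ x := haeν₁.mono fun x h => h.le
  have haeν₂' : ∀ᵐ x ∂ν₂, 0 ≤ x := haeν₂.mono fun x h => h.le
  set F : ℝ → ℝ := fun s => ρ₁ * snI ν₁ s with hF
  have hPhi : ∀ s : ℝ, snLT ρ₂ ν₂ (-Real.log (snLT ρ₁ ν₁ s))
      = Real.exp (-(ρ₂ * snI ν₂ (F s))) := by
    intro s
    rw [snLT_eq ρ₁, Real.log_exp, neg_neg, snLT_eq]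
  have key : ∀ s : ℝ, 0 < s → 0 < snI ν₂ (F s) := by
    intro s hs
    have hlt : laplaceTransform μ₃ s < 1 := sn_LT_lt_one haeμ₃ hs
    rw [hLT s hs.le, hPhi] at hlt
    have h2 := Real.exp_lt_one_iff.mp hlt
    nlinarith
  have hFpos : ∀ s : ℝ, 0 < s → 0 < F s := by
    intro s hs
    by_contra h
    push_neg at h
    have he : Set.Ioc (0:ℝ) (F s) = ∅ := Set.Ioc_eq_empty (by intro hh; linarith)
    have h2 := key s hs
    rw [snI, he] at h2
    simp at h2
  have hint₁ : ∀ s : ℝ, 0 < s → IntegrableOn (snG ν₁) (Set.Ioc 0 s) := by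
    intro s hs
    by_contra h
    have h0 := integral_undef h
    have h1 : 0 < snI ν₁ s := by
      have := hFpos s hs; simp only [hF] at this; nlinarith
    rw [snI] at h1
    rw [h0] at h1
    exact lt_irrefl 0 h1
  have hint₂ : ∀ s : ℝ, 0 < s → IntegrableOn (snG ν₂) (Set.Ioc 0 (F s)) := by
    intro s hs
    by_contra h
    have h0 := integral_undef h
    have h1 := key s hs
    rw [snI] at h1
    rw [h0] at h1
    exact lt_irrefl 0 h1
  have hFmono : ∀ a b : ℝ, 0 < a → a ≤ b → F a ≤ F b := by
    intro a b ha hab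
    have hb : 0 < b := ha.trans_le hab
    have h := snI_split (ν := ν₁) ha.le hab (hint₁ b hb)
    have h2 : 0 ≤ ∫ u in Set.Ioc a b, snG ν₁ u :=
      setIntegral_nonneg measurableSet_Ioc fun u hu => snG_nonneg haeν₁' (ha.trans hu.1)
    simp only [hF]
    nlinarith
  -- divergence of F
  obtain ⟨u₀', hu₀'⟩ := eventually_atTop.mp
    ((sn_LT_tendsto haeν₁).eventually (eventually_le_nhds (by norm_num : (0:ℝ) < 1/2)))
  set u₀ : ℝ := max u₀' 1 with hu₀def
  have hu₀pos : (0:ℝ) < u₀ := lt_of_lt_of_le one_pos (le_max_right _ _)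
  have hu₀ : ∀ u ≥ u₀, laplaceTransform ν₁ u ≤ 1/2 :=
    fun u hu => hu₀' u ((le_max_left _ _).trans hu)
  have hFtop : Tendsto F atTop atTop := by
    have hlow : Tendsto (fun s : ℝ => ρ₁ * (2⁻¹ * (Real.log s - Real.log u₀))) atTop atTop := by
      apply Tendsto.const_mul_atTop hρ₁
      apply Tendsto.const_mul_atTop (by norm_num)
      exact Real.tendsto_log_atTop.atTop_add tendsto_const_nhds
    refine tendsto_atTop_mono' atTop ?_ hlow
    filter_upwards [eventually_ge_atTop u₀] with s hs
    have hspos : 0 < s := lt_of_lt_of_le hu₀pos hs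
    have hsplit := snI_split (ν := ν₁) hu₀pos.le hs (hint₁ s hspos)
    have hinv0 : IntegrableOn (fun u : ℝ => u⁻¹) (Set.Ioc u₀ s) := by
      rw [← intervalIntegrable_iff_integrableOn_Ioc_of_le hs]
      apply intervalIntegral.intervalIntegrable_inv ?_ continuousOn_id
      intro x hx
      rcases Set.mem_uIcc.mp hx with h | h
      · simp only [id]; nlinarith [h.1, h.2]
      · simp only [id]; nlinarith [h.1, h.2]
    have hinv : IntegrableOn (fun u : ℝ => 2⁻¹ * u⁻¹) (Set.Ioc u₀ s) := hinv0.const_mul _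
    have hmono : ∫ u in Set.Ioc u₀ s, 2⁻¹ * u⁻¹ ≤ ∫ u in Set.Ioc u₀ s, snG ν₁ u := by
      refine setIntegral_mono_on hinv
        ((hint₁ s hspos).mono_set (Set.Ioc_subset_Ioc_left hu₀pos.le)) measurableSet_Ioc ?_
      intro u hu
      have hup : 0 < u := hu₀pos.trans hu.1
      have hψ : laplaceTransform ν₁ u ≤ 1/2 := hu₀ u hu.1.le
      rw [snG, div_eq_mul_inv]
      have : (2:ℝ)⁻¹ ≤ 1 - laplaceTransform ν₁ u := by linarith
      exact mul_le_mul_of_nonneg_right this (inv_nonneg.mpr hup.le)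
    have hval : ∫ u in Set.Ioc u₀ s, (2⁻¹ * u⁻¹ : ℝ) = 2⁻¹ * (Real.log s - Real.log u₀) := by
      rw [integral_const_mul]
      congr 1
      rw [← intervalIntegral.integral_of_le hs, integral_inv, Real.log_div hspos.ne' hu₀pos.ne']
      intro hmem
      rcases Set.mem_uIcc.mp hmem with h | h
      · nlinarith [h.1, h.2]
      · nlinarith [h.1, h.2]
    have hI0 : 0 ≤ snI ν₁ u₀ := snI_nonneg haeν₁' u₀
    simp only [hF]
    rw [hval] at hmono
    nlinarith
  have hPhipos : ∀ x : ℝ, 0 < snLT ρ₂ ν₂ (-Real.log (snLT ρ₁ ν₁ x)) := fun x => Real.exp_pos _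
  -- main part A for t ≥ 1
  have mainA : ∀ t : ℝ, 1 ≤ t →
      Tendsto (fun s => snLT ρ₂ ν₂ (-Real.log (snLT ρ₁ ν₁ (t * s))) /
        snLT ρ₂ ν₂ (-Real.log (snLT ρ₁ ν₁ s))) atTop (nhds 1) := by
    intro t ht
    have ht0 : (0:ℝ) < t := lt_of_lt_of_le one_pos ht
    set D : ℝ → ℝ := fun s => ∫ u in Set.Ioc (F s) (F (t*s)), snG ν₂ u with hD
    have hratio : ∀ᶠ s in atTop,
        Real.exp (-(ρ₂ * D s)) = snLT ρ₂ ν₂ (-Real.log (snLT ρ₁ ν₁ (t * s))) /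
          snLT ρ₂ ν₂ (-Real.log (snLT ρ₁ ν₁ s)) := by
      filter_upwards [eventually_gt_atTop (0:ℝ)] with s hs
      have hts : 0 < t*s := by positivity
      have hFsts : F s ≤ F (t*s) := hFmono s (t*s) hs (le_mul_of_one_le_left hs.le ht)
      have hsplit := snI_split (ν := ν₂) (hFpos s hs).le hFsts (hint₂ (t*s) hts)
      rw [hPhi, hPhi, ← Real.exp_sub]
      congr 1
      rw [hsplit]
      simp only [hD]
      ring
    have hD0 : ∀ᶠ s in atTop, 0 ≤ D s := by
      filter_upwards [eventually_gt_atTop (0:ℝ)] with s hs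
      exact setIntegral_nonneg measurableSet_Ioc fun u hu =>
        snG_nonneg haeν₂' ((hFpos s hs).trans hu.1)
    have hDle : ∀ᶠ s in atTop,
        D s ≤ Real.log (F s + ρ₁ * Real.log t) - Real.log (F s) := by
      filter_upwards [eventually_gt_atTop (0:ℝ)] with s hs
      have hts : 0 < t*s := by positivity
      have hFsts : F s ≤ F (t*s) := hFmono s (t*s) hs (le_mul_of_one_le_left hs.le ht)
      have h1 := snIncr_le haeν₂' (hFpos s hs) hFsts
        ((hint₂ (t*s) hts).mono_set (Set.Ioc_subset_Ioc_left (hFpos s hs).le))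
      have hFd : F (t*s) ≤ F s + ρ₁ * Real.log t := by
        have hsplit1 := snI_split (ν := ν₁) hs.le (le_mul_of_one_le_left hs.le ht)
          (hint₁ (t*s) hts)
        have hle1 := snIncr_le haeν₁' hs (le_mul_of_one_le_left hs.le ht)
          ((hint₁ (t*s) hts).mono_set (Set.Ioc_subset_Ioc_left hs.le))
        have hlog : Real.log (t*s) - Real.log s = Real.log t := by
          rw [Real.log_mul ht0.ne' hs.ne']; ring
        simp only [hF]
        nlinarith
      have h2 : Real.log (F (t*s)) ≤ Real.log (F s + ρ₁ * Real.log t) :=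
        Real.log_le_log (hFpos (t*s) hts) hFd
      simp only [hD]
      linarith
    have hupper : Tendsto (fun s => Real.log (F s + ρ₁ * Real.log t) - Real.log (F s))
        atTop (nhds 0) := by
      set a : ℝ := ρ₁ * Real.log t with ha
      have ha0 : 0 ≤ a := mul_nonneg hρ₁.le (Real.log_nonneg ht)
      have h1 : Tendsto (fun x : ℝ => Real.log (x + a) - Real.log x) atTop (nhds 0) := by
        have h2 : Tendsto (fun x : ℝ => 1 + a / x) atTop (nhds 1) := by
          have := tendsto_const_nhds (α := ℝ) (x := (1:ℝ)) (f := atTop)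
          simpa using this.add (tendsto_const_nhds.div_atTop (tendsto_id (α := ℝ)))
        have h3 := (Real.continuousAt_log one_ne_zero).tendsto.comp h2
        rw [Real.log_one] at h3
        apply h3.congr'
        filter_upwards [eventually_gt_atTop (0:ℝ)] with x hx
        show Real.log (1 + a/x) = Real.log (x+a) - Real.log x
        rw [← Real.log_div (by positivity) hx.ne']
        congr 1
        field_simp
      exact h1.comp hFtop
    have hDtend : Tendsto D atTop (nhds 0) :=
      tendsto_of_tendsto_of_tendsto_of_le_of_le' tendsto_const_nhds hupper hD0 hDle
    have hexp : Tendsto (fun s => Real.exp (-(ρ₂ * D s))) atTop (nhds 1) := by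
      have h4 : Tendsto (fun s => -(ρ₂ * D s)) atTop (nhds 0) := by
        have := (hDtend.const_mul ρ₂).neg
        simpa using this
      have h5 := (Real.continuous_exp.tendsto 0).comp h4
      rw [Real.exp_zero] at h5
      exact h5
    exact hexp.congr' hratio
  have partA : ∀ t > (0:ℝ),
      Tendsto (fun s => snLT ρ₂ ν₂ (-Real.log (snLT ρ₁ ν₁ (t * s))) /
        snLT ρ₂ ν₂ (-Real.log (snLT ρ₁ ν₁ s))) atTop (nhds 1) := by
    intro t ht
    rcases le_or_gt 1 t with h1 | h1
    · exact mainA t h1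
    · have hinv1 : 1 ≤ t⁻¹ := by
        have h2 := mul_inv_cancel₀ ht.ne'
        nlinarith [inv_pos.mpr ht]
      have hcomp := (mainA t⁻¹ hinv1).comp (Tendsto.const_mul_atTop ht (tendsto_id (α := ℝ)))
      have hinv : Tendsto (fun s => (snLT ρ₂ ν₂ (-Real.log (snLT ρ₁ ν₁ (t⁻¹ * (t * s)))) /
          snLT ρ₂ ν₂ (-Real.log (snLT ρ₁ ν₁ (t * s))))⁻¹) atTop (nhds 1) := by
        simpa using hcomp.inv₀ one_ne_zero
      apply hinv.congr
      intro s
      have h2 : t⁻¹ * (t * s) = s := by field_simp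
      rw [h2, inv_div]
  refine ⟨partA, ?_⟩
  intro hSD
  obtain ⟨μc, hμcprob, hμc0, hconv⟩ := hSD (1/2) (by norm_num)
  haveI := hμcprob
  have hid : ∀ s : ℝ, laplaceTransform μ₃ s
      = laplaceTransform μc s * laplaceTransform μ₃ (s * (1/2)) := by
    intro s
    conv_lhs => rw [hconv]
    rw [sn_laplace_conv, sn_laplace_map]
  have hμcae : ∀ᵐ x ∂μc, 0 ≤ x := by
    rw [ae_iff]
    convert hμc0 using 2
    ext x
    simp [not_le]
  have hLTμ₃pos : ∀ s : ℝ, 0 ≤ s → 0 < laplaceTransform μ₃ s := by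
    intro s hs
    rw [hLT s hs]
    exact hPhipos s
  have hLTμc_tend : Tendsto (laplaceTransform μc) atTop (nhds 1) := by
    have h1 := partA (1/2) (by norm_num)
    have h2 : Tendsto (fun s => snLT ρ₂ ν₂ (-Real.log (snLT ρ₁ ν₁ s)) /
        snLT ρ₂ ν₂ (-Real.log (snLT ρ₁ ν₁ ((1/2) * s)))) atTop (nhds 1) := by
      have h3 := h1.inv₀ one_ne_zero
      simp only [inv_div, inv_one] at h3
      exact h3
    apply h2.congr'
    filter_upwards [eventually_ge_atTop (0:ℝ)] with s hs
    have hcs : (0:ℝ) ≤ (1/2) * s := by linarith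
    rw [← hLT s hs, ← hLT ((1/2)*s) hcs, hid s]
    rw [show s * (1/2) = (1/2) * s by ring]
    rw [mul_div_assoc, div_self (hLTμ₃pos ((1/2)*s) hcs).ne', mul_one]
  have hLTμc_one : laplaceTransform μc 1 = 1 := by
    have hge : 1 ≤ laplaceTransform μc 1 := by
      apply le_of_tendsto hLTμc_tend
      filter_upwards [eventually_ge_atTop (1:ℝ)] with s hs
      exact sn_laplace_antitone hμcae zero_le_one hs
    have hle := sn_LT_le_one (ν := μc) hμcae zero_le_one
    linarith
  have hcc : laplaceTransform μ₃ 1 = laplaceTransform μ₃ (1/2) := by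
    have h := hid 1
    rw [hLTμc_one, one_mul, one_mul] at h
    exact h
  have hI2eq : snI ν₂ (F 1) = snI ν₂ (F (1/2)) := by
    have h1 : Real.exp (-(ρ₂ * snI ν₂ (F 1))) = Real.exp (-(ρ₂ * snI ν₂ (F (1/2)))) := by
      rw [← hPhi, ← hPhi, ← hLT 1 (by norm_num), ← hLT (1/2) (by norm_num)]
      exact hcc
    have h2 := Real.exp_eq_exp.mp h1
    have h3 : ρ₂ * snI ν₂ (F 1) = ρ₂ * snI ν₂ (F (1/2)) := by linarith
    exact mul_left_cancel₀ hρ₂.ne' h3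
  have hchalf : (0:ℝ) < 1/2 := by norm_num
  have hc1 : F (1/2) ≤ F 1 := hFmono (1/2) 1 hchalf (by norm_num)
  have hFeq : F (1/2) = F 1 := by
    by_contra hne
    have hlt : F (1/2) < F 1 := lt_of_le_of_ne hc1 hne
    have hsplit := snI_split (ν := ν₂) (hFpos (1/2) hchalf).le hlt.le (hint₂ 1 one_pos)
    have hpos := snIncr_pos haeν₂ (hFpos (1/2) hchalf) hlt
      ((hint₂ 1 one_pos).mono_set (Set.Ioc_subset_Ioc_left (hFpos (1/2) hchalf).le))
    rw [hI2eq] at hsplit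
    linarith
  have hI1eq : snI ν₁ (1/2) = snI ν₁ 1 := by
    simp only [hF] at hFeq
    exact mul_left_cancel₀ hρ₁.ne' hFeq
  have hsplit1 := snI_split (ν := ν₁) (by norm_num : (0:ℝ) ≤ 1/2)
    (by norm_num : (1:ℝ)/2 ≤ 1) (hint₁ 1 one_pos)
  have hpos1 := snIncr_pos haeν₁ hchalf (by norm_num : (1:ℝ)/2 < 1)
    ((hint₁ 1 one_pos).mono_set (Set.Ioc_subset_Ioc_left hchalf.le))
  rw [hI1eq] at hsplit1
  linarith
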